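/- Consider an instance of the Unbounded Knapsack Problem with n ≥ 1 items having positive integer weights w_1, …, w_n, positive integer profits p_1, …, p_n, and integer capacity W ≥ 0, where item 1 has the maximum profit-to-weight ratio: p_1/w_1 ≥ p_i/w_i for all i. Let P* be the maximum of ∑_{i=1}^n p_i x_i over all x ∈ ℕ^n with ∑_{i=1}^n w_i x_i ≤ W. If P* > ∑_{i=2}^n p_1 p_i, then there exists a feasible x ∈ ℕ^n with ∑_{i=1}^n w_i x_i ≤ W, ∑_{i=1}^n p_i x_i = P*, and x_1 ≥ 1. -/
import Mathlib


/-- In the unbounded knapsack problem, if item `1` (indexed by `⟨0, hn⟩`) has the maximum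
profit-to-weight ratio and the optimal profit `P` exceeds `∑_{i ≠ 1} p 1 * p i`, then some
optimal solution uses at least one copy of item `1`. -/
theorem knapsack_optimal_uses_best_item (n : ℕ) (hn : 0 < n) (w p : Fin n → ℕ)
    (hw : ∀ i, 0 < w i) (hp : ∀ i, 0 < p i) (W : ℕ)
    (hratio : ∀ i, p i * w ⟨0, hn⟩ ≤ p ⟨0, hn⟩ * w i)
    (P : ℕ)
    (hP : IsGreatest {q | ∃ x : Fin n → ℕ, (∑ i, w i * x i ≤ W) ∧ q = ∑ i, p i * x i} P)
    (hbig : (∑ i ∈ Finset.univ.filter (fun i => i ≠ ⟨0, hn⟩), p ⟨0, hn⟩ * p i) < P) :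
    ∃ x : Fin n → ℕ, (∑ i, w i * x i ≤ W) ∧ (∑ i, p i * x i = P) ∧ 1 ≤ x ⟨0, hn⟩ := by
  obtain ⟨⟨x, hxw, hxP⟩, _⟩ := hP
  set i0 : Fin n := ⟨0, hn⟩ with hi0
  by_cases h0 : 1 ≤ x i0
  · exact ⟨x, hxw, hxP.symm, h0⟩
  push_neg at h0
  have hx0 : x i0 = 0 := by omega
  have hfilter : Finset.univ.filter (fun i => i ≠ i0) = Finset.univ.erase i0 := by
    ext j; simp [Finset.mem_erase, and_comm]
  rw [hfilter] at hbig
  -- find an index i ≠ i0 with x i ≥ p i0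
  have hex : ∃ i, i ≠ i0 ∧ p i0 ≤ x i := by
    by_contra hcon
    push_neg at hcon
    have hsplit : ∑ j, p j * x j = p i0 * x i0 + ∑ j ∈ Finset.univ.erase i0, p j * x j :=
      (Finset.add_sum_erase _ _ (Finset.mem_univ i0)).symm
    have hle : ∑ j ∈ Finset.univ.erase i0, p j * x j
        ≤ ∑ j ∈ Finset.univ.erase i0, p i0 * p j := by
      apply Finset.sum_le_sum
      intro j hj
      have hjne : j ≠ i0 := (Finset.mem_erase.mp hj).1
      have := hcon j hjne
      calc p j * x j ≤ p j * p i0 := Nat.mul_le_mul_left _ (by omega)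
        _ = p i0 * p j := mul_comm _ _
    rw [hxP, hsplit, hx0, mul_zero, zero_add] at hbig
    omega
  obtain ⟨i, hine, hgei⟩ := hex
  -- exchange: remove p i0 copies of item i, add p i copies of item i0
  set z : Fin n → ℕ := Function.update (Function.update x i (x i - p i0)) i0 (p i) with hz
  have hzi0 : z i0 = p i := by simp [hz]
  have hzi : z i = x i - p i0 := by
    simp [hz, Function.update_of_ne hine]
  have hzrest : ∀ j, j ≠ i0 → j ≠ i → z j = x j := by
    intro j h1 h2
    simp [hz, Function.update_of_ne h1, Function.update_of_ne h2]
  have himem : i ∈ Finset.univ.erase i0 := Finset.mem_erase.mpr ⟨hine, Finset.mem_univ i⟩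
  have key : ∀ f : Fin n → ℕ,
      ∑ j, f j * z j + f i * p i0 = ∑ j, f j * x j + f i0 * p i := by
    intro f
    have s1 : ∀ y : Fin n → ℕ, ∑ j, f j * y j
        = f i0 * y i0 + (f i * y i + ∑ j ∈ (Finset.univ.erase i0).erase i, f j * y j) := by
      intro y
      rw [← Finset.add_sum_erase _ _ (Finset.mem_univ i0), ← Finset.add_sum_erase _ _ himem]
    have hrest : ∑ j ∈ (Finset.univ.erase i0).erase i, f j * z j
        = ∑ j ∈ (Finset.univ.erase i0).erase i, f j * x j := by
      apply Finset.sum_congr rfl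
      intro j hj
      have h2 := (Finset.mem_erase.mp hj).1
      have h1 := (Finset.mem_erase.mp (Finset.mem_erase.mp hj).2).1
      rw [hzrest j h1 h2]
    have hm : f i * (x i - p i0) + f i * p i0 = f i * x i := by
      rw [← Nat.mul_add, Nat.sub_add_cancel hgei]
    rw [s1 z, s1 x, hzi0, hzi, hrest, hx0, mul_zero]
    omega
  have hww : w i0 * p i ≤ w i * p i0 := by
    rw [mul_comm, mul_comm (w i)]; exact hratio i
  have hkw := key w
  have hkp := key p
  have hpp : p i * p i0 = p i0 * p i := mul_comm _ _
  refine ⟨z, by omega, by omega, ?_⟩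
  rw [hzi0]
  exact hp i
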